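/- For the knapsack instance with item values v_1,...,v_m ≥ 0, weights w_1,...,w_m ≥ 0, and capacity W, define an XOS valuation with 2 additive clauses on n = m+1 items: clause c_1 with c_1({i}) = v_i + 1 for i ≤ m and c_1({n}) = Σ_i v_i + 1 + W; clause c_2 with c_2({i}) = w_i + v_i + 1 for i ≤ m and c_2({n}) = 0; and prices p_i = v_i for i ≤ m, p_n = Σ_i v_i + 1. Then the optimal noiseless assortment revenue equals p_n plus the optimal knapsack value max{Σ_i v_i x_i : Σ_i w_i x_i ≤ W, x_i ∈ {0,1}}. -/

import Mathlib

open Finset in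
lemma sum_split_option {α : Type*} [DecidableEq α] (S : Finset (Option α)) (f : Option α → ℝ) :
    ∑ i ∈ S, f i = (if none ∈ S then f none else 0) + ∑ i ∈ S.eraseNone, f (some i) := by
  classical
  have h : ∑ i ∈ S.eraseNone, f (some i) = ∑ i ∈ S.erase none, f i := by
    rw [← Finset.image_some_eraseNone S, Finset.sum_image (by intro a _ b _ h; simpa using h)]
  rw [h]
  by_cases hn : none ∈ S
  · simp only [hn, if_true]
    exact (Finset.add_sum_erase _ f hn).symm
  · simp [hn, Finset.erase_eq_of_notMem hn]

/-- Knapsack reduction: for the 2-clause XOS valuation constructed from a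
knapsack instance (`none` plays the role of the special item `n = m + 1`), the
optimal noiseless assortment revenue equals `p n` plus the optimal knapsack
value. -/
theorem stmt15 (m : ℕ) (vv ww : Fin m → ℝ)
    (hvv : ∀ i, 0 ≤ vv i) (hww : ∀ i, 0 ≤ ww i)
    (W : ℝ) (hW : 0 ≤ W)
    (a₁ a₂ : Option (Fin m) → ℝ)
    (ha₁ : ∀ i, a₁ (some i) = vv i + 1)
    (ha₁n : a₁ none = (∑ i, vv i) + 1 + W)
    (ha₂ : ∀ i, a₂ (some i) = ww i + vv i + 1)
    (ha₂n : a₂ none = 0)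
    (p : Option (Fin m) → ℝ)
    (hp : ∀ i, p (some i) = vv i)
    (hpn : p none = (∑ i, vv i) + 1)
    (v : Finset (Option (Fin m)) → ℝ)
    (hv : ∀ S, v S = max (∑ i ∈ S, a₁ i) (∑ i ∈ S, a₂ i))
    -- K is the optimal knapsack value
    (K : ℝ)
    (hK1 : ∃ x : Finset (Fin m), (∑ i ∈ x, ww i) ≤ W ∧ (∑ i ∈ x, vv i) = K)
    (hK2 : ∀ x : Finset (Fin m), (∑ i ∈ x, ww i) ≤ W → (∑ i ∈ x, vv i) ≤ K)
    -- OPT is the optimal noiseless assortment revenue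
    (OPT : ℝ)
    (hO1 : ∃ T B : Finset (Option (Fin m)), B ⊆ T ∧
      (∀ A ⊆ T, v A - ∑ i ∈ A, p i ≤ v B - ∑ i ∈ B, p i) ∧
      (∑ i ∈ B, p i) = OPT)
    (hO2 : ∀ T B : Finset (Option (Fin m)), B ⊆ T →
      (∀ A ⊆ T, v A - ∑ i ∈ A, p i ≤ v B - ∑ i ∈ B, p i) →
      (∑ i ∈ B, p i) ≤ OPT) :
    OPT = p none + K := by
  classical
  set Sv := ∑ i, vv i with hSv
  have hSv0 : 0 ≤ Sv := Finset.sum_nonneg fun i _ => hvv i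
  have hK0 : (0:ℝ) ≤ K := by
    have := hK2 ∅ (by simpa using hW)
    simpa using this
  -- generic formulas
  have F1 : ∀ S : Finset (Option (Fin m)), ∑ i ∈ S, a₁ i =
      (if none ∈ S then Sv + 1 + W else 0) + ((∑ i ∈ S.eraseNone, vv i) + ∑ i ∈ S.eraseNone, (1:ℝ)) := by
    intro S
    rw [sum_split_option, ha₁n, ← Finset.sum_add_distrib]
    simp [ha₁]
  have F2 : ∀ S : Finset (Option (Fin m)), ∑ i ∈ S, a₂ i =
      (∑ i ∈ S.eraseNone, ww i) + (∑ i ∈ S.eraseNone, vv i) + ∑ i ∈ S.eraseNone, (1:ℝ) := by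
    intro S
    rw [sum_split_option, ha₂n, ← Finset.sum_add_distrib, ← Finset.sum_add_distrib]
    simp [ha₂]
  have FP : ∀ S : Finset (Option (Fin m)), ∑ i ∈ S, p i =
      (if none ∈ S then Sv + 1 else 0) + ∑ i ∈ S.eraseNone, vv i := by
    intro S
    rw [sum_split_option, hpn]
    simp [hp]
  have mono : ∀ {A B : Finset (Option (Fin m))}, A ⊆ B → A.eraseNone ⊆ B.eraseNone := by
    intro A B h i hi
    rw [Finset.mem_eraseNone] at hi ⊢
    exact h hi
  refine le_antisymm ?_ ?_
  · -- OPT ≤ p none + K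
    obtain ⟨T, B, hBT, hopt, hOPT⟩ := hO1
    rw [← hOPT, hpn, FP B]
    set y := B.eraseNone with hy
    have hyv : ∑ i ∈ y, vv i ≤ Sv :=
      Finset.sum_le_sum_of_subset_of_nonneg (Finset.subset_univ y) (fun i _ _ => hvv i)
    by_cases hn : none ∈ B
    · simp only [hn, if_true]
      have hyK : ∑ i ∈ y, vv i ≤ K := by
        refine hK2 y ?_
        by_contra hw
        push_neg at hw
        -- consider A = B.erase none
        have hAT : B.erase none ⊆ T := (Finset.erase_subset _ _).trans hBT
        have hAe : (B.erase none).eraseNone = y := by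
          ext i; simp [Finset.mem_eraseNone, hy]
        have hAn : none ∉ B.erase none := Finset.notMem_erase _ _
        have := hopt (B.erase none) hAT
        rw [hv, hv, F1, F2, F1, F2, FP, FP, hAe] at this
        simp only [hn, hAn, if_true, if_false] at this
        rw [← max_sub_sub_right, ← max_sub_sub_right] at this
        have h1 : (∑ i ∈ y, ww i + ∑ i ∈ y, vv i + ∑ i ∈ y, (1:ℝ)) - (0 + ∑ i ∈ y, vv i)
            ≤ max ((0 + (∑ i ∈ y, vv i + ∑ i ∈ y, (1:ℝ))) - (0 + ∑ i ∈ y, vv i))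
              ((∑ i ∈ y, ww i + ∑ i ∈ y, vv i + ∑ i ∈ y, (1:ℝ)) - (0 + ∑ i ∈ y, vv i)) :=
          le_max_right _ _
        have h2 := le_trans h1 this
        rcases max_cases ((Sv + 1 + W + (∑ i ∈ y, vv i + ∑ i ∈ y, (1:ℝ))) - (Sv + 1 + ∑ i ∈ y, vv i))
          ((∑ i ∈ y, ww i + ∑ i ∈ y, vv i + ∑ i ∈ y, (1:ℝ)) - (Sv + 1 + ∑ i ∈ y, vv i)) with
          ⟨he, _⟩ | ⟨he, _⟩ <;> rw [he] at h2 <;> linarith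
      linarith
    · simp only [hn, if_false]
      linarith
  · -- p none + K ≤ OPT
    obtain ⟨x, hxw, hxv⟩ := hK1
    set T : Finset (Option (Fin m)) := insert none (x.image some) with hT
    have hTe : T.eraseNone = x := by
      ext i; simp [hT, Finset.mem_eraseNone]
    have hTn : none ∈ T := Finset.mem_insert_self _ _
    have key : ∀ A ⊆ T, v A - ∑ i ∈ A, p i ≤ v T - ∑ i ∈ T, p i := by
      intro A hA
      have hyx : A.eraseNone ⊆ x := hTe ▸ mono hA
      set y := A.eraseNone with hy
      have hyw : ∑ i ∈ y, ww i ≤ ∑ i ∈ x, ww i :=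
        Finset.sum_le_sum_of_subset_of_nonneg hyx (fun i _ _ => hww i)
      have hy1 : ∑ i ∈ y, (1:ℝ) ≤ ∑ i ∈ x, (1:ℝ) :=
        Finset.sum_le_sum_of_subset_of_nonneg hyx (fun i _ _ => zero_le_one)
      have hy10 : (0:ℝ) ≤ ∑ i ∈ y, (1:ℝ) := Finset.sum_nonneg fun _ _ => zero_le_one
      rw [hv, hv, F1, F2, F1, F2, FP, FP, hTe, ← hy]
      simp only [hTn, if_true]
      rw [← max_sub_sub_right, ← max_sub_sub_right]
      have hTmax : max ((Sv + 1 + W + (∑ i ∈ x, vv i + ∑ i ∈ x, (1:ℝ))) - (Sv + 1 + ∑ i ∈ x, vv i))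
          ((∑ i ∈ x, ww i + ∑ i ∈ x, vv i + ∑ i ∈ x, (1:ℝ)) - (Sv + 1 + ∑ i ∈ x, vv i))
          = W + ∑ i ∈ x, (1:ℝ) := by
        rw [max_eq_left (by linarith)]
        ring
      rw [hTmax]
      by_cases hn : none ∈ A <;> simp only [hn, if_true, if_false] <;>
        apply max_le <;> linarith
    have hrev := hO2 T T (Finset.Subset.refl T) key
    rw [FP T, hTe] at hrev
    simp only [hTn, if_true] at hrev
    rw [hpn]
    linarith
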